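/- arXiv:2205.05732 — 3 statements merged into one kernel-verified Lean document; each statement's English description precedes it below -/
import Mathlib

section
/- Let A and B be real symmetric matrices of the same size, and define λ₁*(M) = sqrt((λ₁(M)² + Tr(M²))/2) where λ₁(M) is the largest eigenvalue. Then |λ₁*(A) - λ₁*(B)| ≤ sqrt(Tr((A-B)²)). -/
open Matrix

/-- The largest eigenvalue of a Hermitian real matrix. -/
noncomputable def lambdaMax {n : Type*} [Fintype n] [DecidableEq n]
    {A : Matrix n n ℝ} (hA : A.IsHermitian) : ℝ :=
  ⨆ i, hA.eigenvalues i

section Aux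
open Finset

lemma trace_sq_eq {n : Type*} [Fintype n] [DecidableEq n]
    {A : Matrix n n ℝ} (hA : A.IsHermitian) :
    Matrix.trace (A * A) = ∑ i, hA.eigenvalues i ^ 2 := by
  set U : Matrix n n ℝ := (hA.eigenvectorUnitary : Matrix n n ℝ)
  set D : Matrix n n ℝ := diagonal (RCLike.ofReal ∘ hA.eigenvalues)
  have hU : star U * U = 1 := Unitary.coe_star_mul_self hA.eigenvectorUnitary
  have h : A = U * D * star U := hA.spectral_theorem
  have : A * A = U * (D * D) * star U := by
    rw [h]; rw [Matrix.mul_assoc (U*D) (star U) (U * D * star U)]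
    rw [← Matrix.mul_assoc (star U) (U*D) (star U), ← Matrix.mul_assoc (star U) U D, hU, one_mul]
    noncomm_ring
  rw [this, Matrix.trace_mul_cycle, ← Matrix.mul_assoc, hU, one_mul]
  simp [D, diagonal_mul_diagonal, trace_diagonal, sq]

lemma trace_sq_nonneg {n : Type*} [Fintype n] [DecidableEq n]
    {A : Matrix n n ℝ} (hA : A.IsHermitian) : 0 ≤ Matrix.trace (A * A) := by
  rw [trace_sq_eq hA]; exact Finset.sum_nonneg fun i _ => sq_nonneg _

lemma abs_eig_le_sqrt_trace {n : Type*} [Fintype n] [DecidableEq n]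
    {C : Matrix n n ℝ} (hC : C.IsHermitian) (j : n) :
    |hC.eigenvalues j| ≤ Real.sqrt (Matrix.trace (C * C)) := by
  rw [trace_sq_eq hC, ← Real.sqrt_sq_eq_abs]
  apply Real.sqrt_le_sqrt
  exact Finset.single_le_sum (fun i _ => sq_nonneg (hC.eigenvalues i)) (Finset.mem_univ j)

lemma trace_sq_eq_sum_sq {n : Type*} [Fintype n] [DecidableEq n]
    {M : Matrix n n ℝ} (hM : M.IsHermitian) :
    Matrix.trace (M * M) = ∑ p : n × n, (M p.1 p.2)^2 := by
  rw [Matrix.trace, Fintype.sum_prod_type]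
  refine Finset.sum_congr rfl fun i _ => ?_
  simp only [Matrix.diag, Matrix.mul_apply]
  refine Finset.sum_congr rfl fun j _ => ?_
  have hij : M j i = M i j := by
    calc M j i = Mᴴ i j := rfl
      _ = M i j := by rw [hM]
  rw [hij, sq]

lemma frob_triangle {n : Type*} [Fintype n] [DecidableEq n]
    {A B : Matrix n n ℝ} (hA : A.IsHermitian) (hB : B.IsHermitian) :
    |Real.sqrt (Matrix.trace (A*A)) - Real.sqrt (Matrix.trace (B*B))|
      ≤ Real.sqrt (Matrix.trace ((A-B)*(A-B))) := by
  classical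
  set vec : Matrix n n ℝ → EuclideanSpace ℝ (n × n) :=
    fun M => (WithLp.equiv 2 _).symm (fun p : n × n => M p.1 p.2) with hvec
  have hnorm : ∀ {M : Matrix n n ℝ}, M.IsHermitian → ‖vec M‖ = Real.sqrt (Matrix.trace (M*M)) := by
    intro M hM
    rw [EuclideanSpace.norm_eq, trace_sq_eq_sum_sq hM]
    congr 1
    exact Finset.sum_congr rfl fun p _ => by simp [hvec, Real.norm_eq_abs, sq_abs]
  have hsub : vec A - vec B = vec (A - B) := rfl
  calc |Real.sqrt (Matrix.trace (A*A)) - Real.sqrt (Matrix.trace (B*B))|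
      = |‖vec A‖ - ‖vec B‖| := by rw [hnorm hA, hnorm hB]
    _ ≤ ‖vec A - vec B‖ := abs_norm_sub_norm_le _ _
    _ = Real.sqrt (Matrix.trace ((A-B)*(A-B))) := by rw [hsub, hnorm (hA.sub hB)]

lemma rayleigh_expand {n : Type*} [Fintype n] [DecidableEq n]
    {C : Matrix n n ℝ} (hC : C.IsHermitian) (x : EuclideanSpace ℝ n) :
    (⇑x) ⬝ᵥ (C *ᵥ ⇑x) = ∑ j, hC.eigenvalues j * (hC.eigenvectorBasis.repr x j)^2 := by
  set b := hC.eigenvectorBasis with hb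
  set c : n → ℝ := fun j => b.repr x j with hc
  have hx : x = ∑ j, c j • b j := (b.sum_repr x).symm
  have hcoe : ⇑(∑ j : n, c j • b j) = ∑ j : n, c j • ⇑(b j) := by
    rw [WithLp.ofLp_sum]; simp only [WithLp.ofLp_smul]
  have hdot : ∀ j, (⇑x) ⬝ᵥ ⇑(b j) = c j := by
    intro j
    have := b.repr_apply_apply x j
    rw [hc]
    simp only [this]
    rw [PiLp.inner_apply]
    simp [dotProduct, mul_comm]
  have hmv : C *ᵥ ⇑x = ∑ j, (c j * hC.eigenvalues j) • ⇑(b j) := by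
    conv_lhs => rw [hx, hcoe]
    rw [show (C *ᵥ ∑ j : n, c j • ⇑(b j)) = C.mulVecLin (∑ j : n, c j • ⇑(b j)) from rfl,
      map_sum]
    refine Finset.sum_congr rfl fun j _ => ?_
    rw [_root_.map_smul, mulVecLin_apply, hC.mulVec_eigenvectorBasis, smul_smul, mul_comm]
  rw [hmv]
  simp only [dotProduct, Finset.sum_apply, Pi.smul_apply, smul_eq_mul, Finset.mul_sum]
  rw [Finset.sum_comm]
  refine Finset.sum_congr rfl fun j _ => ?_
  have h2 := hdot j
  simp only [dotProduct] at h2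
  calc (∑ i, x i * ((c j * hC.eigenvalues j) * b j i))
      = (c j * hC.eigenvalues j) * ∑ i, x i * b j i := by
        rw [Finset.mul_sum]; exact Finset.sum_congr rfl fun i _ => by ring
    _ = hC.eigenvalues j * c j ^2 := by
        have h3 : (∑ i : n, x i * b j i) = c j := h2
        rw [h3]; ring

lemma sum_repr_sq {n : Type*} [Fintype n] [DecidableEq n]
    (b : OrthonormalBasis n ℝ (EuclideanSpace ℝ n)) (x : EuclideanSpace ℝ n)
    (hx : ‖x‖ = 1) : ∑ j, (b.repr x j)^2 = 1 := by
  have h1 : ‖b.repr x‖ = 1 := by rw [b.repr.norm_map, hx]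
  have := EuclideanSpace.norm_eq (b.repr x)
  rw [h1] at this
  have h2 : ∑ j, ‖b.repr x j‖^2 = 1 := by
    nlinarith [Real.sq_sqrt (show (0:ℝ) ≤ ∑ j, ‖b.repr x j‖^2 from Finset.sum_nonneg fun j _ => sq_nonneg _), this]
  simpa [Real.norm_eq_abs, sq_abs] using h2

lemma dot_self_one {n : Type*} [Fintype n] (x : EuclideanSpace ℝ n) (hx : ‖x‖ = 1) :
    (⇑x) ⬝ᵥ (⇑x) = 1 := by
  have h := EuclideanSpace.norm_eq x
  rw [hx] at h
  have h2 : ∑ i, ‖x i‖^2 = 1 := by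
    nlinarith [Real.sq_sqrt (show (0:ℝ) ≤ ∑ i, ‖x i‖^2 from Finset.sum_nonneg fun i _ => sq_nonneg _), h]
  simpa [dotProduct, Real.norm_eq_abs, sq_abs, sq] using h2


section
variable {n : Type*} [Fintype n] [DecidableEq n]

lemma eig_le_lambdaMax {A : Matrix n n ℝ} (hA : A.IsHermitian) (i : n) :
    hA.eigenvalues i ≤ lambdaMax hA :=
  le_ciSup (Set.Finite.bddAbove (Set.finite_range _)) i

lemma rayleigh_le_lambdaMax {B : Matrix n n ℝ} (hB : B.IsHermitian)
    (x : EuclideanSpace ℝ n) (hx : ‖x‖ = 1) :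
    (⇑x) ⬝ᵥ (B *ᵥ ⇑x) ≤ lambdaMax hB := by
  rw [rayleigh_expand hB x]
  calc (∑ j, hB.eigenvalues j * (hB.eigenvectorBasis.repr x j)^2)
      ≤ ∑ j, lambdaMax hB * (hB.eigenvectorBasis.repr x j)^2 :=
        Finset.sum_le_sum fun j _ =>
          mul_le_mul_of_nonneg_right (eig_le_lambdaMax hB j) (sq_nonneg _)
    _ = lambdaMax hB := by
        rw [← Finset.mul_sum, sum_repr_sq hB.eigenvectorBasis x hx, mul_one]

lemma abs_rayleigh_le {C : Matrix n n ℝ} (hC : C.IsHermitian)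
    (x : EuclideanSpace ℝ n) (hx : ‖x‖ = 1) :
    |(⇑x) ⬝ᵥ (C *ᵥ ⇑x)| ≤ Real.sqrt (Matrix.trace (C * C)) := by
  rw [rayleigh_expand hC x]
  calc |∑ j, hC.eigenvalues j * (hC.eigenvectorBasis.repr x j)^2|
      ≤ ∑ j, |hC.eigenvalues j * (hC.eigenvectorBasis.repr x j)^2| :=
        Finset.abs_sum_le_sum_abs _ _
    _ ≤ ∑ j, Real.sqrt (Matrix.trace (C * C)) * (hC.eigenvectorBasis.repr x j)^2 := by
        refine Finset.sum_le_sum fun j _ => ?_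
        rw [abs_mul, abs_of_nonneg (sq_nonneg (hC.eigenvectorBasis.repr x j))]
        exact mul_le_mul_of_nonneg_right (abs_eig_le_sqrt_trace hC j) (sq_nonneg _)
    _ = Real.sqrt (Matrix.trace (C * C)) := by
        rw [← Finset.mul_sum, sum_repr_sq hC.eigenvectorBasis x hx, mul_one]

lemma weyl_le [Nonempty n] {A B : Matrix n n ℝ} (hA : A.IsHermitian) (hB : B.IsHermitian) :
    lambdaMax hA ≤ lambdaMax hB + Real.sqrt (Matrix.trace ((A-B)*(A-B))) := by
  obtain ⟨i₀, hi₀⟩ := Finite.exists_max hA.eigenvalues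
  have hv1 : ‖hA.eigenvectorBasis i₀‖ = 1 := hA.eigenvectorBasis.orthonormal.1 i₀
  have hvA : (⇑(hA.eigenvectorBasis i₀)) ⬝ᵥ (A *ᵥ ⇑(hA.eigenvectorBasis i₀))
      = hA.eigenvalues i₀ := by
    rw [hA.mulVec_eigenvectorBasis, dotProduct_smul,
      dot_self_one (hA.eigenvectorBasis i₀) hv1, smul_eq_mul, mul_one]
  have hsplit : (⇑(hA.eigenvectorBasis i₀)) ⬝ᵥ (A *ᵥ ⇑(hA.eigenvectorBasis i₀))
      = (⇑(hA.eigenvectorBasis i₀)) ⬝ᵥ (B *ᵥ ⇑(hA.eigenvectorBasis i₀))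
        + (⇑(hA.eigenvectorBasis i₀)) ⬝ᵥ ((A - B) *ᵥ ⇑(hA.eigenvectorBasis i₀)) := by
    rw [← dotProduct_add, ← Matrix.add_mulVec]
    congr 1
    rw [add_sub_cancel]
  have h1 : lambdaMax hA ≤ hA.eigenvalues i₀ := ciSup_le hi₀
  have h2 := rayleigh_le_lambdaMax hB (hA.eigenvectorBasis i₀) hv1
  have h3 := (abs_le.mp (abs_rayleigh_le (hA.sub hB) (hA.eigenvectorBasis i₀) hv1)).2
  rw [hsplit] at hvA
  linarith

end

lemma sqrt_lip (a1 a2 b1 b2 d : ℝ) (h1 : |a1 - b1| ≤ d) (h2 : |a2 - b2| ≤ d) :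
    |Real.sqrt ((a1^2 + a2^2)/2) - Real.sqrt ((b1^2 + b2^2)/2)| ≤ d := by
  have hd : 0 ≤ d := le_trans (abs_nonneg _) h1
  have key : ∀ x1 x2 y1 y2 : ℝ, |x1 - y1| ≤ d → |x2 - y2| ≤ d →
      Real.sqrt ((x1^2 + x2^2)/2) ≤ Real.sqrt ((y1^2 + y2^2)/2) + d := by
    intro x1 x2 y1 y2 g1 g2
    set s := Real.sqrt ((y1^2 + y2^2)/2) with hs
    have hs0 : 0 ≤ s := Real.sqrt_nonneg _
    have hs2 : s^2 = (y1^2 + y2^2)/2 := Real.sq_sqrt (by positivity)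
    rw [Real.sqrt_le_iff]
    refine ⟨by positivity, ?_⟩
    have hb1 : |x1| ≤ |y1| + d := by
      have : |x1 - y1| ≤ d := g1
      have h := abs_add_le y1 (x1 - y1)
      simp only [add_sub_cancel] at h
      linarith
    have hb2 : |x2| ≤ |y2| + d := by
      have : |x2 - y2| ≤ d := g2
      have h := abs_add_le y2 (x2 - y2)
      simp only [add_sub_cancel] at h
      linarith
    have hx1 : x1^2 ≤ (|y1| + d)^2 := by
      nlinarith [sq_abs x1, abs_nonneg x1, abs_nonneg y1]
    have hx2 : x2^2 ≤ (|y2| + d)^2 := by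
      nlinarith [sq_abs x2, abs_nonneg x2, abs_nonneg y2]
    have h2s : |y1| + |y2| ≤ 2 * s := by
      nlinarith [sq_nonneg (|y1| - |y2|), hs2, sq_abs y1, sq_abs y2, hs0,
        abs_nonneg y1, abs_nonneg y2]
    nlinarith [hx1, hx2, hs2, sq_abs y1, sq_abs y2,
      mul_le_mul_of_nonneg_left h2s hd]
  rw [abs_sub_le_iff]
  constructor
  · linarith [key a1 a2 b1 b2 h1 h2]
  · have h1' : |b1 - a1| ≤ d := by rw [abs_sub_comm]; exact h1
    have h2' : |b2 - a2| ≤ d := by rw [abs_sub_comm]; exact h2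
    linarith [key b1 b2 a1 a2 h1' h2']

end Aux


/-- `λ₁*(A) = sqrt((λ₁(A)² + Tr(A²))/2)`. -/
noncomputable def lambdaStar {n : Type*} [Fintype n] [DecidableEq n]
    {A : Matrix n n ℝ} (hA : A.IsHermitian) : ℝ :=
  Real.sqrt ((lambdaMax hA ^ 2 + Matrix.trace (A * A)) / 2)

theorem stmt_6 (m : ℕ) (A B : Matrix (Fin m) (Fin m) ℝ)
    (hA : A.IsHermitian) (hB : B.IsHermitian) :
    |lambdaStar hA - lambdaStar hB| ≤ Real.sqrt (Matrix.trace ((A - B) * (A - B))) := by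
  rcases Nat.eq_zero_or_pos m with hm | hm
  · subst hm
    have hzero : ∀ {M : Matrix (Fin 0) (Fin 0) ℝ} (hM : M.IsHermitian), lambdaStar hM = 0 := by
      intro M hM
      have h1 : lambdaMax hM = 0 := by
        rw [lambdaMax, Real.iSup_of_isEmpty]
      have h2 : Matrix.trace (M * M) = 0 := by simp [Matrix.trace]
      rw [lambdaStar, h1, h2]
      norm_num
    rw [hzero hA, hzero hB, sub_zero, abs_zero]
    exact Real.sqrt_nonneg _
  · haveI : Nonempty (Fin m) := ⟨⟨0, hm⟩⟩
    set d := Real.sqrt (Matrix.trace ((A - B) * (A - B))) with hd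
    have hBA : (B - A) * (B - A) = (A - B) * (A - B) := by noncomm_ring
    have h1 : |lambdaMax hA - lambdaMax hB| ≤ d := by
      rw [abs_sub_le_iff]
      constructor
      · linarith [weyl_le hA hB]
      · have := weyl_le hB hA
        rw [hBA] at this
        linarith
    have h2 : |Real.sqrt (Matrix.trace (A*A)) - Real.sqrt (Matrix.trace (B*B))| ≤ d :=
      frob_triangle hA hB
    have hAe : lambdaStar hA
        = Real.sqrt ((lambdaMax hA ^ 2 + (Real.sqrt (Matrix.trace (A*A)))^2) / 2) := by
      rw [lambdaStar, Real.sq_sqrt (trace_sq_nonneg hA)]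
    have hBe : lambdaStar hB
        = Real.sqrt ((lambdaMax hB ^ 2 + (Real.sqrt (Matrix.trace (B*B)))^2) / 2) := by
      rw [lambdaStar, Real.sq_sqrt (trace_sq_nonneg hB)]
    rw [hAe, hBe]
    exact sqrt_lip _ _ _ _ d h1 h2
end

section
/- Define g(λ₁) = ∫_{λ₁ > λ₂ > ⋯ > λ_m} exp(-∑_{i=2}^m λ_i²/4) · ∏_{1 ≤ i < j ≤ m}(λ_i - λ_j) dλ₂⋯dλ_m. Then g(λ₁)/λ₁^{m-1} converges to Z_{m-1} as λ₁ → +∞, where Z_{m-1} = ∫_{λ₂ > ⋯ > λ_m} exp(-∑_{i=2}^m λ_i²/4) ∏_{2 ≤ i < j ≤ m}(λ_i - λ_j) dλ₂⋯dλ_m. -/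
open MeasureTheory Filter Finset

/-- `g(t)`: integral over ordered tuples `t > λ₂ > ⋯ > λ_m` of the Gaussian weight
times the full Vandermonde factor (with `λ₁ = t`). -/
noncomputable def gInt (m : ℕ) (t : ℝ) : ℝ :=
  ∫ v in {v : Fin (m - 1) → ℝ | (∀ i j : Fin (m - 1), i < j → v j < v i) ∧ ∀ i, v i < t},
    Real.exp (-(∑ i, v i ^ 2) / 4) *
      ((∏ i, (t - v i)) * ∏ i, ∏ j ∈ Finset.Ioi i, (v i - v j))

/-- The GOE partition function of size `m - 1` (ordered form). -/
noncomputable def Zconst (m : ℕ) : ℝ :=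
  ∫ v in {v : Fin (m - 1) → ℝ | ∀ i j : Fin (m - 1), i < j → v j < v i},
    Real.exp (-(∑ i, v i ^ 2) / 4) * ∏ i, ∏ j ∈ Finset.Ioi i, (v i - v j)

private lemma aux_exp_integrable (c : ℝ) :
    Integrable (fun x : ℝ => Real.exp (-x ^ 2 / 4 + c * |x|)) := by
  have h : Integrable (fun x : ℝ => Real.exp (2 * c ^ 2) * Real.exp (-(1/8 : ℝ) * x ^ 2)) :=
    (integrable_exp_neg_mul_sq (by norm_num)).const_mul _
  refine h.mono ?_ ?_
  · exact (Real.continuous_exp.comp (((continuous_pow 2).neg.div_const 4).add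
      (continuous_const.mul continuous_abs))).aestronglyMeasurable
  · filter_upwards with x
    rw [Real.norm_eq_abs, Real.norm_eq_abs, Real.abs_exp, abs_mul, Real.abs_exp, Real.abs_exp,
      ← Real.exp_add]
    apply Real.exp_le_exp.2
    nlinarith [sq_nonneg (|x| - 4 * c), sq_abs x]

theorem stmt_13 (m : ℕ) (hm : 2 ≤ m) :
    Tendsto (fun t : ℝ => gInt m t / t ^ (m - 1)) atTop (nhds (Zconst m)) := by
  classical
  set C : Set (Fin (m-1) → ℝ) := {v | ∀ i j : Fin (m-1), i < j → v j < v i} with hCdef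
  have hCmeas : MeasurableSet C := by
    have : C = ⋂ (i : Fin (m-1)), ⋂ (j : Fin (m-1)), ⋂ (_ : i < j), {v : Fin (m-1) → ℝ | v j < v i} := by
      ext v; simp [hCdef, Set.mem_iInter]
    rw [this]
    exact MeasurableSet.iInter fun i => MeasurableSet.iInter fun j => MeasurableSet.iInter fun _ =>
      measurableSet_lt (measurable_pi_apply j) (measurable_pi_apply i)
  have hBmeas : ∀ t : ℝ, MeasurableSet {v : Fin (m-1) → ℝ | ∀ i, v i < t} := by
    intro t
    have : {v : Fin (m-1) → ℝ | ∀ i, v i < t} = ⋂ i, {v : Fin (m-1) → ℝ | v i < t} := by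
      ext v; simp [Set.mem_iInter]
    rw [this]
    exact MeasurableSet.iInter fun i => measurableSet_lt (measurable_pi_apply i) measurable_const
  set f : (Fin (m-1) → ℝ) → ℝ := fun v =>
    Real.exp (-(∑ i, v i ^ 2) / 4) * ∏ i, ∏ j ∈ Finset.Ioi i, (v i - v j) with hfdef
  have hfcont : Continuous f := by
    apply Continuous.mul
    · exact Real.continuous_exp.comp
        ((continuous_finset_sum _ fun i _ => (continuous_apply i).pow 2).neg.div_const 4)
    · exact continuous_finset_prod _ fun i _ => continuous_finset_prod _ fun j _ =>
        (continuous_apply i).sub (continuous_apply j)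
  set F : ℝ → (Fin (m-1) → ℝ) → ℝ := fun t =>
    ({v : Fin (m-1) → ℝ | ∀ i, v i < t}).indicator
      (fun v => f v * ∏ i, (1 - v i / t)) with hFdef
  -- Step 1: identification of g(t)/t^(m-1) with ∫_C F t
  have key : ∀ t : ℝ, 0 < t → gInt m t / t ^ (m-1) = ∫ v in C, F t v := by
    intro t ht
    have hsets : {v : Fin (m - 1) → ℝ | (∀ i j : Fin (m - 1), i < j → v j < v i) ∧ ∀ i, v i < t}
        = {v : Fin (m-1) → ℝ | ∀ i, v i < t} ∩ C := by
      ext v; simp [hCdef, and_comm]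
    rw [gInt, hsets, ← Measure.restrict_restrict (hBmeas t), ← integral_indicator (hBmeas t),
      ← integral_div]
    refine setIntegral_congr_fun hCmeas fun v _ => ?_
    simp only [hFdef, hfdef]
    by_cases hv : v ∈ {v : Fin (m-1) → ℝ | ∀ i, v i < t}
    · rw [Set.indicator_of_mem hv, Set.indicator_of_mem hv]
      have hprod : ∏ i, (1 - v i / t) = (∏ i, (t - v i)) / t ^ (m-1) := by
        have h1 : ∀ i : Fin (m-1), (1 : ℝ) - v i / t = (t - v i) / t := fun i => by
          field_simp
        rw [Finset.prod_congr rfl fun i _ => h1 i, Finset.prod_div_distrib,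
          Finset.prod_const]
        simp
      rw [hprod]
      ring
    · rw [Set.indicator_of_notMem hv, Set.indicator_of_notMem hv, zero_div]
  -- bound function
  set bound : (Fin (m-1) → ℝ) → ℝ := fun v =>
    Real.exp (-(∑ i, v i ^ 2) / 4) *
      ((∏ i, (1 + |v i|)) * ∏ i, ∏ j ∈ Finset.Ioi i, |v i - v j|) with hbdef
  have hbnonneg : ∀ v, 0 ≤ bound v := by
    intro v
    apply mul_nonneg (Real.exp_nonneg _)
    apply mul_nonneg
    · exact Finset.prod_nonneg fun i _ => by positivity
    · exact Finset.prod_nonneg fun i _ => Finset.prod_nonneg fun j _ => abs_nonneg _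
  -- integrability of the bound
  have hbint : Integrable bound (volume.restrict C) := by
    set k : ℕ := ∑ i : Fin (m-1), (Finset.Ioi i).card with hkdef
    set c : ℝ := 1 + 2 * k with hcdef
    have hmaj : ∀ v : Fin (m-1) → ℝ, bound v ≤ ∏ i, Real.exp (-(v i) ^ 2 / 4 + c * |v i|) := by
      intro v
      set S : ℝ := ∑ i, |v i| with hSdef
      have hS0 : 0 ≤ S := Finset.sum_nonneg fun i _ => abs_nonneg _
      have hle : ∀ i : Fin (m-1), |v i| ≤ S :=
        fun i => Finset.single_le_sum (fun j _ => abs_nonneg (v j)) (Finset.mem_univ i)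
      have h1 : (∏ i, (1 + |v i|)) ≤ Real.exp S := by
        rw [hSdef, Real.exp_sum]
        refine Finset.prod_le_prod (fun i _ => by positivity) fun i _ => ?_
        linarith [Real.add_one_le_exp (|v i|)]
      have h2 : (∏ i, ∏ j ∈ Finset.Ioi i, |v i - v j|) ≤ Real.exp (2 * k * S) := by
        have hstep : (∏ i, ∏ j ∈ Finset.Ioi i, |v i - v j|)
            ≤ ∏ i : Fin (m-1), ∏ j ∈ Finset.Ioi i, Real.exp (2 * S) := by
          refine Finset.prod_le_prod
            (fun i _ => Finset.prod_nonneg fun j _ => abs_nonneg _) fun i _ => ?_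
          refine Finset.prod_le_prod (fun j _ => abs_nonneg _) fun j _ => ?_
          have := abs_sub (v i) (v j)
          have h2S : |v i - v j| ≤ 2 * S := by
            have := abs_sub_abs_le_abs_sub (v i) (v j)
            calc |v i - v j| ≤ |v i| + |v j| := abs_sub _ _
              _ ≤ 2 * S := by linarith [hle i, hle j]
          calc |v i - v j| ≤ 2 * S := h2S
            _ ≤ Real.exp (2 * S) := by linarith [Real.add_one_le_exp (2 * S)]
        calc (∏ i, ∏ j ∈ Finset.Ioi i, |v i - v j|)
            ≤ ∏ i : Fin (m-1), ∏ j ∈ Finset.Ioi i, Real.exp (2 * S) := hstep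
          _ = Real.exp (2 * k * S) := by
              simp only [Finset.prod_const]
              rw [Finset.prod_pow_eq_pow_sum, ← hkdef, ← Real.exp_nat_mul]
              ring_nf
      have hEsum : Real.exp (-(∑ i, v i ^ 2) / 4) = ∏ i, Real.exp (-(v i) ^ 2 / 4) := by
        rw [← Real.exp_sum]
        congr 1
        rw [← Finset.sum_div, ← Finset.sum_neg_distrib]
      calc bound v ≤ Real.exp (-(∑ i, v i ^ 2) / 4) * (Real.exp S * Real.exp (2 * k * S)) := by
            refine mul_le_mul_of_nonneg_left ?_ (Real.exp_nonneg _)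
            exact mul_le_mul h1 h2
              (Finset.prod_nonneg fun i _ => Finset.prod_nonneg fun j _ => abs_nonneg _)
              (Real.exp_nonneg _)
        _ = ∏ i, Real.exp (-(v i) ^ 2 / 4 + c * |v i|) := by
            simp_rw [Real.exp_add]
            rw [Finset.prod_mul_distrib, ← hEsum, ← Real.exp_sum, ← Finset.mul_sum, ← hSdef,
              ← Real.exp_add]
            congr 1
            rw [hcdef]
            push_cast
            ring
    have hBint : Integrable (fun v : Fin (m-1) → ℝ => ∏ i, Real.exp (-(v i) ^ 2 / 4 + c * |v i|)) := by
      exact Integrable.fintype_prod fun i => aux_exp_integrable c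
    have : Integrable bound := by
      refine hBint.mono ?_ ?_
      · apply Continuous.aestronglyMeasurable
        apply Continuous.mul (Real.continuous_exp.comp
          ((continuous_finset_sum _ fun i _ => (continuous_apply i).pow 2).neg.div_const 4))
        apply Continuous.mul
        · exact continuous_finset_prod _ fun i _ => continuous_const.add (continuous_apply i).abs
        · exact continuous_finset_prod _ fun i _ => continuous_finset_prod _ fun j _ =>
            ((continuous_apply i).sub (continuous_apply j)).abs
      · filter_upwards with v
        rw [Real.norm_eq_abs, abs_of_nonneg (hbnonneg v), Real.norm_eq_abs]
        rw [abs_of_nonneg (Finset.prod_nonneg fun i _ => Real.exp_nonneg _)]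
        exact hmaj v
    exact this.restrict
  -- dominated convergence
  have main : Tendsto (fun t => ∫ v in C, F t v) atTop (nhds (∫ v in C, f v)) := by
    apply tendsto_integral_filter_of_dominated_convergence bound
    · filter_upwards with t
      exact ((hfcont.mul (continuous_finset_prod _ fun i _ =>
        continuous_const.sub ((continuous_apply i :
          Continuous fun v : Fin (m-1) → ℝ => v i).div_const t))).aestronglyMeasurable).indicator
        (hBmeas t)
    · filter_upwards [eventually_ge_atTop (1 : ℝ)] with t ht
      filter_upwards with v
      by_cases hv : v ∈ {v : Fin (m-1) → ℝ | ∀ i, v i < t}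
      · simp only [hFdef]
        rw [Set.indicator_of_mem hv, Real.norm_eq_abs]
        have hP : |∏ i, (1 - v i / t)| ≤ ∏ i, (1 + |v i|) := by
          rw [Finset.abs_prod]
          refine Finset.prod_le_prod (fun i _ => abs_nonneg _) fun i _ => ?_
          calc |1 - v i / t| ≤ |(1:ℝ)| + |v i / t| := abs_sub _ _
            _ = 1 + |v i| / t := by rw [abs_one, abs_div, abs_of_pos (by linarith : (0:ℝ) < t)]
            _ ≤ 1 + |v i| := by
                have h := div_le_self (abs_nonneg (v i)) ht
                linarith
        have hfabs : |f v| = Real.exp (-(∑ i, v i ^ 2) / 4)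
            * |∏ i, ∏ j ∈ Finset.Ioi i, (v i - v j)| := by
          simp only [hfdef]
          rw [abs_mul, Real.abs_exp]
        have hV : |∏ i, ∏ j ∈ Finset.Ioi i, (v i - v j)|
            ≤ ∏ i, ∏ j ∈ Finset.Ioi i, |v i - v j| := by
          simp [Finset.abs_prod]
        calc |f v * ∏ i, (1 - v i / t)| = |f v| * |∏ i, (1 - v i / t)| := abs_mul _ _
          _ ≤ |f v| * ∏ i, (1 + |v i|) := mul_le_mul_of_nonneg_left hP (abs_nonneg _)
          _ = Real.exp (-(∑ i, v i ^ 2) / 4)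
              * (|∏ i, ∏ j ∈ Finset.Ioi i, (v i - v j)| * ∏ i, (1 + |v i|)) := by
              rw [hfabs]; ring
          _ ≤ Real.exp (-(∑ i, v i ^ 2) / 4)
              * ((∏ i, ∏ j ∈ Finset.Ioi i, |v i - v j|) * ∏ i, (1 + |v i|)) := by
              refine mul_le_mul_of_nonneg_left (mul_le_mul_of_nonneg_right hV ?_)
                (Real.exp_nonneg _)
              exact Finset.prod_nonneg fun i _ => by positivity
          _ = bound v := by simp only [hbdef]; ring
      · simp only [hFdef]
        rw [Set.indicator_of_notMem hv, norm_zero]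
        exact hbnonneg v
    · exact hbint
    · filter_upwards with v
      have hev : ∀ᶠ t : ℝ in atTop, ∀ i, v i < t :=
        Filter.eventually_all.2 fun i => eventually_gt_atTop (v i)
      have : Tendsto (fun t : ℝ => f v * ∏ i, (1 - v i / t)) atTop (nhds (f v * ∏ i : Fin (m-1), (1:ℝ))) := by
        refine tendsto_const_nhds.mul (tendsto_finset_prod _ fun i _ => ?_)
        have : Tendsto (fun t : ℝ => v i / t) atTop (nhds 0) :=
          Tendsto.div_atTop tendsto_const_nhds tendsto_id
        simpa using tendsto_const_nhds.sub this
      simp only [Finset.prod_const_one, mul_one] at this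
      refine this.congr' ?_
      filter_upwards [hev] with t htv
      simp only [hFdef]
      rw [Set.indicator_of_mem (show v ∈ {v : Fin (m-1) → ℝ | ∀ i, v i < t} from htv)]
  have : Zconst m = ∫ v in C, f v := rfl
  rw [this]
  refine main.congr' ?_
  filter_upwards [eventually_gt_atTop (0:ℝ)] with t ht
  exact (key t ht).symm
end

section
/- Let I be a finite index set, and for each α ∈ I let X_α be a Bernoulli random variable with p_α = P(X_α = 1), and let N_α ⊆ I with α ∈ N_α. Set S = ∑_α X_α and λ = ∑_α p_α ∈ (0,∞). Suppose for each α that X_α is independent of the σ-algebra generated by {X_β : β ∉ N_α}. Then |P(S = 0) − e^{−λ}| ≤ min(1, λ^{−1})(b₁ + b₂), where b₁ = ∑_{α∈I} ∑_{β∈N_α} p_α p_β and b₂ = ∑_{α∈I} ∑_{β∈N_α, β≠α} E[X_α X_β]. -/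
open MeasureTheory ProbabilityTheory
namespace ChenStein

noncomputable def F (lam : ℝ) : ℕ → ℝ
  | 0 => 0
  | (k+1) => ((k : ℝ) * F lam k + (if k = 0 then 1 else 0) - Real.exp (-lam)) / lam

lemma stein_eq {lam : ℝ} (hl : lam ≠ 0) (k : ℕ) :
    lam * F lam (k+1) - k * F lam k = (if k = 0 then 1 else 0) - Real.exp (-lam) := by
  rw [F]; field_simp; ring

noncomputable def T (lam : ℝ) (k : ℕ) : ℝ :=
  ∑' m : ℕ, lam ^ (k + m) / (Nat.factorial (k + m) : ℝ)

lemma sumT (lam : ℝ) (k : ℕ) :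
    Summable (fun m : ℕ => lam ^ (k + m) / (Nat.factorial (k + m) : ℝ)) :=
  (Real.summable_pow_div_factorial lam).comp_injective (add_right_injective k)

lemma T_zero (lam : ℝ) : T lam 0 = Real.exp lam := by
  rw [Real.exp_eq_exp_ℝ, NormedSpace.exp_eq_tsum_div]
  simp only [T, Nat.zero_add, zero_add]

lemma T_succ (lam : ℝ) (k : ℕ) :
    T lam k = lam ^ k / (Nat.factorial k : ℝ) + T lam (k+1) := by
  rw [T, Summable.tsum_eq_zero_add (sumT lam k), T]
  have h1 : lam ^ (k + 0) / (Nat.factorial (k + 0) : ℝ) = lam ^ k / (Nat.factorial k : ℝ) := by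
    norm_num
  have h2 : (∑' m : ℕ, lam ^ (k + (m+1)) / (Nat.factorial (k + (m+1)) : ℝ))
      = ∑' m : ℕ, lam ^ ((k+1) + m) / (Nat.factorial ((k+1) + m) : ℝ) :=
    tsum_congr fun m => by rw [show k + (m+1) = (k+1) + m by omega]
  rw [h1, h2]

variable {lam : ℝ}

lemma T_one (lam : ℝ) : T lam 1 = Real.exp lam - 1 := by
  have := T_succ lam 0
  rw [T_zero] at this
  simp only [pow_zero, Nat.factorial_zero, Nat.cast_one, div_one] at this
  linarith

lemma F_one (hl : 0 < lam) : F lam 1 = (1 - Real.exp (-lam)) / lam := by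
  rw [F]; norm_num [F]

lemma F_closed (hl : 0 < lam) (k : ℕ) :
    F lam (k+1) = (Nat.factorial k : ℝ) * lam⁻¹ ^ (k+1) * Real.exp (-lam) * T lam (k+1) := by
  induction k with
  | zero =>
    rw [F_one hl, T_one, Real.exp_neg]
    have he := Real.exp_pos lam
    field_simp
    rw [Nat.factorial_zero, Nat.cast_one, zero_add, pow_one, one_div, mul_one, mul_assoc, mul_inv_cancel₀ (ne_of_gt hl), mul_one]
  | succ k ih =>
    rw [F]
    rw [ih, T_succ lam (k+1)]
    have hk : ((k+1 : ℕ) : ℝ) ≠ 0 := by positivity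
    have hfac : ((Nat.factorial (k+1) : ℕ) : ℝ) = (k+1 : ℕ) * (Nat.factorial k : ℝ) := by
      rw [Nat.factorial_succ]; push_cast; ring
    have hpow : lam⁻¹ ^ (k+1) * lam ^ (k+1) = 1 := by
      rw [← mul_pow, inv_mul_cancel₀ (ne_of_gt hl), one_pow]
    have hfacpos : (0:ℝ) < (Nat.factorial (k+1) : ℝ) := by
      exact_mod_cast Nat.factorial_pos _
    simp only [Nat.succ_ne_zero, if_false, Nat.cast_succ]
    rw [hfac]
    simp only [inv_pow]
    field_simp
    push_cast
    ring

lemma fact_cast_pos (n : ℕ) : (0:ℝ) < (Nat.factorial n : ℝ) := by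
  exact_mod_cast Nat.factorial_pos n

lemma key_nat (k m : ℕ) :
    (m+1) * Nat.factorial k * Nat.factorial (m+1) ≤ Nat.factorial (k+2+m) := by
  have h1 := Nat.factorial_mul_factorial_dvd_factorial_add k (m+2)
  have h2 : Nat.factorial k * Nat.factorial (m+2) ≤ Nat.factorial (k+2+m) := by
    rw [show k+2+m = k + (m+2) by omega]
    exact Nat.le_of_dvd (Nat.factorial_pos _) h1
  calc (m+1) * Nat.factorial k * Nat.factorial (m+1)
      ≤ (m+2) * Nat.factorial k * Nat.factorial (m+1) := by
        have : m+1 ≤ m+2 := by omega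
        exact Nat.mul_le_mul_right _ (Nat.mul_le_mul_right _ this)
    _ = Nat.factorial k * Nat.factorial (m+2) := by
        rw [Nat.factorial_succ (m+1)]; ring
    _ ≤ Nat.factorial (k+2+m) := h2

lemma key_real (k m : ℕ) :
    ((m:ℝ)+1) * (Nat.factorial k : ℝ) / (Nat.factorial (k+2+m) : ℝ)
      ≤ 1 / (Nat.factorial (m+1) : ℝ) := by
  rw [div_le_div_iff₀ (fact_cast_pos _) (fact_cast_pos _), one_mul]
  exact_mod_cast key_nat k m

lemma T_diff (hl : 0 < lam) (k : ℕ) :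
    lam * T lam (k+1) - ((k:ℝ)+1) * T lam (k+2)
      = ∑' m : ℕ, ((m:ℝ)+1) * lam ^ (k+2+m) / (Nat.factorial (k+2+m) : ℝ) := by
  have s1 : Summable (fun m : ℕ => lam * (lam ^ ((k+1) + m) / (Nat.factorial ((k+1) + m) : ℝ))) :=
    (sumT lam (k+1)).mul_left lam
  have s2 : Summable (fun m : ℕ => ((k:ℝ)+1) * (lam ^ ((k+2) + m) / (Nat.factorial ((k+2) + m) : ℝ))) :=
    (sumT lam (k+2)).mul_left _
  rw [T, T, ← tsum_mul_left, ← tsum_mul_left, ← Summable.tsum_sub s1 s2]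
  refine tsum_congr fun m => ?_
  have hfe : (Nat.factorial (k+2+m) : ℝ) = ((k:ℝ)+2+m) * (Nat.factorial (k+1+m) : ℝ) := by
    rw [show k+2+m = (k+1+m)+1 by omega, Nat.factorial_succ]
    push_cast; ring_nf
  have hpow : lam * lam ^ (k+1+m) = lam ^ (k+2+m) := by
    rw [← pow_succ']
    congr 1
    omega
  have hf1 : (0:ℝ) < (Nat.factorial (k+1+m) : ℝ) := fact_cast_pos _
  rw [hfe, ← hpow]
  field_simp
  ring

lemma F_diff_eq (hl : 0 < lam) (k : ℕ) :
    F lam (k+1) - F lam (k+2)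
      = Real.exp (-lam) * (Nat.factorial k : ℝ) * lam⁻¹ ^ (k+2) *
          (lam * T lam (k+1) - ((k:ℝ)+1) * T lam (k+2)) := by
  rw [F_closed hl k, F_closed hl (k+1)]
  have hfac : (Nat.factorial (k+1) : ℝ) = ((k:ℝ)+1) * (Nat.factorial k : ℝ) := by
    rw [Nat.factorial_succ]; push_cast; ring
  have hpow : lam⁻¹ ^ (k+1) = lam⁻¹ ^ (k+2) * lam := by
    symm
    rw [pow_succ, mul_assoc, inv_mul_cancel₀ (ne_of_gt hl), mul_one]
  rw [hfac, hpow]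
  ring

lemma F_antitone (hl : 0 < lam) (k : ℕ) : F lam (k+2) ≤ F lam (k+1) := by
  have h := F_diff_eq hl k
  have hD : 0 ≤ lam * T lam (k+1) - ((k:ℝ)+1) * T lam (k+2) := by
    rw [T_diff hl k]
    refine tsum_nonneg fun m => ?_
    positivity
  have hge : 0 ≤ Real.exp (-lam) * (Nat.factorial k : ℝ) * lam⁻¹ ^ (k+2) *
      (lam * T lam (k+1) - ((k:ℝ)+1) * T lam (k+2)) :=
    mul_nonneg (by positivity) hD
  linarith

lemma sum_pow_div_fact_succ (hl : 0 < lam) :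
    ∑' m : ℕ, lam ^ m / (Nat.factorial (m+1) : ℝ) = (Real.exp lam - 1) / lam := by
  have h : lam * ∑' m : ℕ, lam ^ m / (Nat.factorial (m+1) : ℝ) = Real.exp lam - 1 := by
    rw [← tsum_mul_left, ← T_one lam, T]
    refine tsum_congr fun m => ?_
    rw [show 1 + m = m + 1 by omega, pow_succ]
    field_simp
  field_simp at h ⊢
  linarith

lemma sum_succ_fact_summable (hl : 0 < lam) :
    Summable (fun m : ℕ => lam ^ m / (Nat.factorial (m+1) : ℝ)) := by
  refine Summable.of_nonneg_of_le (fun m => by positivity) (fun m => ?_)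
    (Real.summable_pow_div_factorial lam)
  apply div_le_div_of_nonneg_left ?_ (fact_cast_pos _) ?_
  · positivity
  · exact_mod_cast Nat.factorial_le (by omega)

lemma F_diff_le (hl : 0 < lam) (k : ℕ) :
    F lam (k+1) - F lam (k+2) ≤ (1 - Real.exp (-lam)) / lam := by
  rw [F_diff_eq hl k, T_diff hl k]
  have hterm : ∀ m : ℕ,
      Real.exp (-lam) * (Nat.factorial k : ℝ) * lam⁻¹ ^ (k+2) *
        (((m:ℝ)+1) * lam ^ (k+2+m) / (Nat.factorial (k+2+m) : ℝ))
      ≤ Real.exp (-lam) * (lam ^ m / (Nat.factorial (m+1) : ℝ)) := by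
    intro m
    have hpow : lam⁻¹ ^ (k+2) * lam ^ (k+2+m) = lam ^ m := by
      have h2 : lam ^ (k+2+m) = lam ^ (k+2) * lam ^ m := by rw [pow_add]
      rw [h2, inv_pow, ← mul_assoc, inv_mul_cancel₀ (pow_ne_zero _ (ne_of_gt hl)), one_mul]
    have h1 : Real.exp (-lam) * (Nat.factorial k : ℝ) * lam⁻¹ ^ (k+2) *
        (((m:ℝ)+1) * lam ^ (k+2+m) / (Nat.factorial (k+2+m) : ℝ))
        = Real.exp (-lam) *
            ((((m:ℝ)+1) * (Nat.factorial k : ℝ) / (Nat.factorial (k+2+m) : ℝ)) * lam ^ m) := by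
      rw [← hpow]; ring
    rw [h1]
    refine mul_le_mul_of_nonneg_left ?_ (le_of_lt (Real.exp_pos _))
    calc (((m:ℝ)+1) * (Nat.factorial k : ℝ) / (Nat.factorial (k+2+m) : ℝ)) * lam ^ m
        ≤ (1 / (Nat.factorial (m+1) : ℝ)) * lam ^ m :=
          mul_le_mul_of_nonneg_right (key_real k m) (by positivity)
      _ = lam ^ m / (Nat.factorial (m+1) : ℝ) := by ring
  have hsum1 : Summable (fun m : ℕ =>
      Real.exp (-lam) * (Nat.factorial k : ℝ) * lam⁻¹ ^ (k+2) *
        (((m:ℝ)+1) * lam ^ (k+2+m) / (Nat.factorial (k+2+m) : ℝ))) := by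
    have s1 : Summable (fun m : ℕ => lam * (lam ^ ((k+1) + m) / (Nat.factorial ((k+1) + m) : ℝ))) :=
      (sumT lam (k+1)).mul_left lam
    have s2 : Summable (fun m : ℕ => ((k:ℝ)+1) * (lam ^ ((k+2) + m) / (Nat.factorial ((k+2) + m) : ℝ))) :=
      (sumT lam (k+2)).mul_left _
    refine Summable.mul_left _ ?_
    refine (s1.sub s2).congr fun m => ?_
    have hfe : (Nat.factorial (k+2+m) : ℝ) = ((k:ℝ)+2+m) * (Nat.factorial (k+1+m) : ℝ) := by
      rw [show k+2+m = (k+1+m)+1 by omega, Nat.factorial_succ]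
      push_cast; ring_nf
    have hpow : lam * lam ^ (k+1+m) = lam ^ (k+2+m) := by
      rw [← pow_succ']; congr 1; omega
    have hf1 : (0:ℝ) < (Nat.factorial (k+1+m) : ℝ) := fact_cast_pos _
    rw [hfe, ← hpow]
    field_simp
    ring
  have hsum2 : Summable (fun m : ℕ => Real.exp (-lam) * (lam ^ m / (Nat.factorial (m+1) : ℝ))) :=
    (sum_succ_fact_summable hl).mul_left _
  calc Real.exp (-lam) * (Nat.factorial k : ℝ) * lam⁻¹ ^ (k+2) *
        ∑' m : ℕ, ((m:ℝ)+1) * lam ^ (k+2+m) / (Nat.factorial (k+2+m) : ℝ)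
      = ∑' m : ℕ, Real.exp (-lam) * (Nat.factorial k : ℝ) * lam⁻¹ ^ (k+2) *
        (((m:ℝ)+1) * lam ^ (k+2+m) / (Nat.factorial (k+2+m) : ℝ)) := by
        rw [tsum_mul_left]
    _ ≤ ∑' m : ℕ, Real.exp (-lam) * (lam ^ m / (Nat.factorial (m+1) : ℝ)) :=
        Summable.tsum_le_tsum hterm hsum1 hsum2
    _ = Real.exp (-lam) * ((Real.exp lam - 1) / lam) := by
        rw [tsum_mul_left, sum_pow_div_fact_succ hl]
    _ = (1 - Real.exp (-lam)) / lam := by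
        rw [Real.exp_neg]
        have := Real.exp_pos lam
        field_simp

lemma F_nonneg (hl : 0 < lam) : ∀ k, 0 ≤ F lam k := by
  intro k
  cases k with
  | zero => rw [F]
  | succ k =>
    rw [F_closed hl k]
    have hT : 0 ≤ T lam (k+1) := tsum_nonneg fun m => by positivity
    exact mul_nonneg (by positivity) hT

lemma F_le_F_one (hl : 0 < lam) : ∀ k, F lam (k+1) ≤ F lam 1 := by
  intro k
  induction k with
  | zero => exact le_refl _
  | succ k ih => exact le_trans (F_antitone hl k) ih

lemma F_bound (hl : 0 < lam) (k : ℕ) : |F lam k| ≤ (1 - Real.exp (-lam)) / lam := by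
  have hc : 0 ≤ (1 - Real.exp (-lam)) / lam := by
    have h1 : Real.exp (-lam) ≤ 1 := Real.exp_le_one_iff.mpr (by linarith)
    have h2 : 0 ≤ 1 - Real.exp (-lam) := by linarith
    positivity
  cases k with
  | zero => rw [F]; simpa using hc
  | succ k =>
    rw [abs_of_nonneg (F_nonneg hl _)]
    calc F lam (k+1) ≤ F lam 1 := F_le_F_one hl k
      _ = (1 - Real.exp (-lam)) / lam := F_one hl

lemma F_step (hl : 0 < lam) (n : ℕ) :
    |F lam (n+2) - F lam (n+1)| ≤ (1 - Real.exp (-lam)) / lam := by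
  rw [abs_sub_comm, abs_of_nonneg (by linarith [F_antitone hl n])]
  exact F_diff_le hl n

lemma F_chain (hl : 0 < lam) (k j : ℕ) :
    |F lam (k+1+j) - F lam (k+1)| ≤ j * ((1 - Real.exp (-lam)) / lam) := by
  induction j with
  | zero => simp
  | succ j ih =>
    have h1 : |F lam (k+1+(j+1)) - F lam (k+1+j)| ≤ (1 - Real.exp (-lam)) / lam := by
      have := F_step hl (k+j)
      rw [show k+1+(j+1) = (k+j)+2 by omega, show k+1+j = (k+j)+1 by omega]
      exact this
    calc |F lam (k+1+(j+1)) - F lam (k+1)|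
        ≤ |F lam (k+1+(j+1)) - F lam (k+1+j)| + |F lam (k+1+j) - F lam (k+1)| := by
          exact abs_sub_le _ _ _
      _ ≤ (1 - Real.exp (-lam)) / lam + j * ((1 - Real.exp (-lam)) / lam) := add_le_add h1 ih
      _ = (j+1 : ℕ) * ((1 - Real.exp (-lam)) / lam) := by push_cast; ring

lemma c_le_min (hl : 0 < lam) : (1 - Real.exp (-lam)) / lam ≤ min 1 lam⁻¹ := by
  have he : 0 < Real.exp (-lam) := Real.exp_pos _
  refine le_min ?_ ?_
  · rw [div_le_one hl]
    have := Real.add_one_le_exp (-lam)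
    linarith
  · rw [← one_div]
    have : (0:ℝ) < Real.exp (-lam) := Real.exp_pos _
    rw [div_le_div_iff₀ hl hl]
    nlinarith

lemma intg_bd {Ω : Type*} [MeasurableSpace Ω] {μ : Measure Ω} [IsProbabilityMeasure μ]
    {g : Ω → ℝ} (hg : Measurable g) (C : ℝ) (h : ∀ ω, |g ω| ≤ C) : Integrable g μ :=
  (integrable_const C).mono' hg.aestronglyMeasurable
    (ae_of_all _ (by simpa [Real.norm_eq_abs] using h))

end ChenStein

open ChenStein in
theorem stmt_16 {Ω : Type*} [MeasurableSpace Ω] (μ : Measure Ω) [IsProbabilityMeasure μ]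
    {I : Type*} [Fintype I] [DecidableEq I]
    (X : I → Ω → ℝ) (hmeas : ∀ α, Measurable (X α))
    (h01 : ∀ α ω, X α ω = 0 ∨ X α ω = 1)
    (N : I → Finset I) (hN : ∀ α, α ∈ N α)
    (p : I → ℝ) (hp : ∀ α, p α = (μ {ω | X α ω = 1}).toReal)
    (lam : ℝ) (hlam : lam = ∑ α, p α) (hlampos : 0 < lam)
    (hindep : ∀ α, Indep (MeasurableSpace.comap (X α) inferInstance)
      (⨆ (β : I) (_ : β ∉ N α), MeasurableSpace.comap (X β) inferInstance) μ) :
    |(μ {ω | ∑ α, X α ω = 0}).toReal - Real.exp (-lam)| ≤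
      min 1 lam⁻¹ *
        ((∑ α, ∑ β ∈ N α, p α * p β) +
          ∑ α, ∑ β ∈ (N α).erase α, ∫ ω, X α ω * X β ω ∂μ) := by
  classical
  set c : ℝ := (1 - Real.exp (-lam)) / lam with hc
  have hcnon : 0 ≤ c := by
    have h1 : Real.exp (-lam) ≤ 1 := Real.exp_le_one_iff.mpr (by linarith)
    have h2 : 0 ≤ 1 - Real.exp (-lam) := by linarith
    rw [hc]; positivity
  have hlne : lam ≠ 0 := ne_of_gt hlampos
  -- the 0/1-valued nat variables
  set Y : I → Ω → ℕ := fun α ω => if X α ω = 1 then 1 else 0 with hYdef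
  have hXY : ∀ α ω, X α ω = (Y α ω : ℝ) := by
    intro α ω
    rcases h01 α ω with h | h <;> simp [hYdef, h]
  have hY01 : ∀ α ω, Y α ω = 0 ∨ Y α ω = 1 := by
    intro α ω
    by_cases h : X α ω = 1 <;> simp [hYdef, h]
  have hYle : ∀ α ω, (Y α ω : ℝ) ≤ 1 := by
    intro α ω
    rcases hY01 α ω with h | h <;> simp [h]
  have hYnn : ∀ α ω, (0:ℝ) ≤ (Y α ω : ℝ) := fun α ω => Nat.cast_nonneg _
  have hgnat : Measurable (fun x : ℝ => if x = 1 then (1:ℕ) else 0) :=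
    Measurable.ite (measurableSet_eq) measurable_const measurable_const
  have hmY : ∀ α, Measurable (Y α) := fun α => hgnat.comp (hmeas α)
  set S : Ω → ℕ := fun ω => ∑ α, Y α ω with hSdef
  have hmS : Measurable S := Finset.measurable_sum _ fun α _ => hmY α
  have hpnn : ∀ α, 0 ≤ p α := fun α => (hp α) ▸ ENNReal.toReal_nonneg
  -- F bounds
  have hFb : ∀ k, |F lam k| ≤ c := fun k => F_bound hlampos k
  have hFchain : ∀ k j, |F lam (k+1+j) - F lam (k+1)| ≤ j * c := fun k j => F_chain hlampos k j
  -- identify the event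
  have hev : {ω | ∑ α, X α ω = 0} = {ω | S ω = 0} := by
    ext ω
    have : ∑ α, X α ω = (S ω : ℝ) := by
      rw [hSdef]; push_cast
      exact Finset.sum_congr rfl fun α _ => hXY α ω
    simp only [Set.mem_setOf_eq, this, Nat.cast_eq_zero]
  have hevm : MeasurableSet {ω | S ω = 0} := hmS (measurableSet_singleton 0)
  -- expectation of Y α
  have hEY : ∀ α, ∫ ω, (Y α ω : ℝ) ∂μ = p α := by
    intro α
    have h1 : (fun ω => (Y α ω : ℝ)) = Set.indicator {ω | X α ω = 1} (fun _ => (1:ℝ)) := by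
      funext ω
      by_cases h : X α ω = 1 <;> simp [hYdef, h, Set.indicator]
    have hs : MeasurableSet {ω | X α ω = 1} := hmeas α (measurableSet_eq)
    rw [h1, hp α]
    rw [← measureReal_def]; exact integral_indicator_one hs
  -- generic integrability of Y
  have hmYR : ∀ α, Measurable (fun ω => (Y α ω : ℝ)) := fun α =>
    (measurable_from_top (f := (Nat.cast : ℕ → ℝ))).comp (hmY α)
  have iY : ∀ α, Integrable (fun ω => (Y α ω : ℝ)) μ := fun α =>
    intg_bd (hmYR α) 1 (fun ω => by rw [abs_of_nonneg (hYnn α ω)]; exact hYle α ω)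
  -- splitting of S
  have hsplit : ∀ α ω, S ω = (∑ β ∈ N α, Y β ω) + (∑ β ∈ (N α)ᶜ, Y β ω) := by
    intro α ω
    rw [hSdef]
    exact (Finset.sum_add_sum_compl (N α) _).symm
  have hZsplit : ∀ α ω, (∑ β ∈ N α, Y β ω) = Y α ω + ∑ β ∈ (N α).erase α, Y β ω := by
    intro α ω
    exact (Finset.add_sum_erase (N α) _ (hN α)).symm
  have hcard : ∀ (s : Finset I) ω, ((∑ β ∈ s, Y β ω : ℕ) : ℝ) ≤ (Fintype.card I : ℝ) := by
    intro s ω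
    have h1 : (∑ β ∈ s, Y β ω) ≤ Fintype.card I := by
      calc ∑ β ∈ s, Y β ω ≤ ∑ _β ∈ s, 1 := Finset.sum_le_sum fun β _ => by
            rcases hY01 β ω with h | h <;> simp [h]
        _ = s.card := by simp
        _ ≤ Fintype.card I := Finset.card_le_univ s
    exact_mod_cast h1
  have hmFS1 : Measurable (fun ω => F lam (S ω + 1)) :=
    (measurable_from_top (f := fun n => F lam (n+1))).comp hmS
  have hmFS : Measurable (fun ω => F lam (S ω)) :=
    (measurable_from_top (f := fun n => F lam n)).comp hmS
  have iFS1 : Integrable (fun ω => F lam (S ω + 1)) μ := intg_bd hmFS1 c (fun ω => hFb _)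
  have iFS : Integrable (fun ω => F lam (S ω)) μ := intg_bd hmFS c (fun ω => hFb _)
  -- the key per-α estimate
  have hkey : ∀ α, |∫ ω, (p α * F lam (S ω + 1) - (Y α ω : ℝ) * F lam (S ω)) ∂μ|
      ≤ c * ((∑ β ∈ N α, p α * p β) + ∑ β ∈ (N α).erase α, ∫ ω, X α ω * X β ω ∂μ) := by
    intro α
    set W : Ω → ℕ := fun ω => ∑ β ∈ (N α)ᶜ, Y β ω with hWdef
    set Z : Ω → ℕ := fun ω => ∑ β ∈ N α, Y β ω with hZdef
    set Z' : Ω → ℕ := fun ω => ∑ β ∈ (N α).erase α, Y β ω with hZ'def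
    have hmW : Measurable W := Finset.measurable_sum _ fun β _ => hmY β
    have hmFW1 : Measurable (fun ω => F lam (W ω + 1)) :=
      (measurable_from_top (f := fun n => F lam (n+1))).comp hmW
    have iFW1 : Integrable (fun ω => F lam (W ω + 1)) μ := intg_bd hmFW1 c (fun ω => hFb _)
    -- independence
    have hIndep : IndepFun (fun ω => (Y α ω : ℝ)) (fun ω => F lam (W ω + 1)) μ := by
      rw [IndepFun_iff_Indep]
      refine indep_of_indep_of_le_left (indep_of_indep_of_le_right (hindep α) ?_) ?_
      · refine Measurable.comap_le ?_
        refine Measurable.comp (measurable_from_top (f := fun n => F lam (n+1))) ?_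
        refine Finset.measurable_sum _ fun β hβ => ?_
        have hβ' : β ∉ N α := by simpa using hβ
        have hXβ : Measurable[⨆ (β : I) (_ : β ∉ N α),
            MeasurableSpace.comap (X β) inferInstance] (X β) :=
          Measurable.of_comap_le (le_iSup_of_le β (le_iSup_of_le hβ' le_rfl))
        exact hgnat.comp hXβ
      · refine Measurable.comap_le ?_
        have hXα : Measurable[MeasurableSpace.comap (X α) inferInstance] (X α) :=
          Measurable.of_comap_le le_rfl
        exact ((measurable_from_top (f := (Nat.cast : ℕ → ℝ))).comp hgnat).comp hXα
    have hmid : ∫ ω, (Y α ω : ℝ) * F lam (W ω + 1) ∂μ = p α * ∫ ω, F lam (W ω + 1) ∂μ := by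
      have h := IndepFun.integral_mul_eq_mul_integral hIndep (iY α).aestronglyMeasurable iFW1.aestronglyMeasurable
      have h' : (fun ω => (Y α ω : ℝ) * F lam (W ω + 1))
          = ((fun ω => ((Y α ω : ℕ) : ℝ)) * fun ω => F lam (W ω + 1)) := rfl
      rw [h', h, hEY α]
    have habs2 : ∀ x y : ℝ, |x - y| ≤ |x| + |y| := fun x y => by
      rw [sub_eq_add_neg]
      exact (abs_add_le _ _).trans (by rw [abs_neg])
    -- integrability of the pieces
    have iterm1 : Integrable (fun ω => p α * (F lam (S ω + 1) - F lam (W ω + 1))) μ := by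
      refine intg_bd ((hmFS1.sub hmFW1).const_mul (p α)) (p α * (c + c)) fun ω => ?_
      rw [abs_mul, abs_of_nonneg (hpnn α)]
      exact mul_le_mul_of_nonneg_left
        ((habs2 _ _).trans (add_le_add (hFb _) (hFb _))) (hpnn α)
    have iprodW : Integrable (fun ω => (Y α ω : ℝ) * F lam (W ω + 1)) μ := by
      refine intg_bd ((hmYR α).mul hmFW1) c fun ω => ?_
      rw [abs_mul]
      calc |(Y α ω : ℝ)| * |F lam (W ω + 1)| ≤ 1 * c :=
            mul_le_mul (by rw [abs_of_nonneg (hYnn α ω)]; exact hYle α ω) (hFb _)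
              (abs_nonneg _) one_pos.le
        _ = c := one_mul c
    have imid : Integrable (fun ω => (p α - (Y α ω : ℝ)) * F lam (W ω + 1)) μ := by
      have hpt2 : (fun ω => (p α - (Y α ω : ℝ)) * F lam (W ω + 1))
          = fun ω => p α * F lam (W ω + 1) - (Y α ω : ℝ) * F lam (W ω + 1) := by
        funext ω; ring
      rw [hpt2]
      exact (iFW1.const_mul _).sub iprodW
    have iterm3 : Integrable (fun ω => (Y α ω : ℝ) * (F lam (W ω + 1) - F lam (S ω))) μ := by
      refine intg_bd ((hmYR α).mul (hmFW1.sub hmFS)) (c + c) fun ω => ?_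
      rw [abs_mul]
      calc |(Y α ω : ℝ)| * |F lam (W ω + 1) - F lam (S ω)| ≤ 1 * (c + c) :=
            mul_le_mul (by rw [abs_of_nonneg (hYnn α ω)]; exact hYle α ω)
              ((habs2 _ _).trans (add_le_add (hFb _) (hFb _))) (abs_nonneg _) one_pos.le
        _ = c + c := one_mul _
    -- decomposition with vanishing middle term
    have hmid0 : ∫ ω, (p α - (Y α ω : ℝ)) * F lam (W ω + 1) ∂μ = 0 := by
      have hpt2 : (fun ω => (p α - (Y α ω : ℝ)) * F lam (W ω + 1))
          = fun ω => p α * F lam (W ω + 1) - (Y α ω : ℝ) * F lam (W ω + 1) := by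
        funext ω; ring
      rw [hpt2, integral_sub (iFW1.const_mul _) iprodW, hmid, integral_const_mul]
      ring
    have hdec : ∫ ω, (p α * F lam (S ω + 1) - (Y α ω : ℝ) * F lam (S ω)) ∂μ
        = (∫ ω, p α * (F lam (S ω + 1) - F lam (W ω + 1)) ∂μ)
          + ∫ ω, (Y α ω : ℝ) * (F lam (W ω + 1) - F lam (S ω)) ∂μ := by
      have hpt : (fun ω => p α * F lam (S ω + 1) - (Y α ω : ℝ) * F lam (S ω))
          = fun ω => (p α * (F lam (S ω + 1) - F lam (W ω + 1)))
              + (((p α - (Y α ω : ℝ)) * F lam (W ω + 1))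
              + ((Y α ω : ℝ) * (F lam (W ω + 1) - F lam (S ω)))) := by
        funext ω; ring
      have imid' : Integrable (fun ω => ((p α - (Y α ω : ℝ)) * F lam (W ω + 1))
          + ((Y α ω : ℝ) * (F lam (W ω + 1) - F lam (S ω)))) μ := imid.add iterm3
      rw [hpt, integral_add iterm1 imid', integral_add imid iterm3, hmid0]
      ring
    -- bound for the first term
    have hmZ : Measurable Z := Finset.measurable_sum _ fun β _ => hmY β
    have hmZR : Measurable (fun ω => (Z ω : ℝ)) :=
      (measurable_from_top (f := (Nat.cast : ℕ → ℝ))).comp hmZ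
    have hptA : ∀ ω, |p α * (F lam (S ω + 1) - F lam (W ω + 1))| ≤ p α * ((Z ω : ℝ) * c) := by
      intro ω
      rw [abs_mul, abs_of_nonneg (hpnn α)]
      refine mul_le_mul_of_nonneg_left ?_ (hpnn α)
      have harg : S ω + 1 = W ω + 1 + Z ω := by
        have h1 := hsplit α ω
        simp only [hZdef, hWdef]
        omega
      rw [harg]
      exact hFchain (W ω) (Z ω)
    have iA : Integrable (fun ω => p α * ((Z ω : ℝ) * c)) μ := by
      refine intg_bd ((hmZR.mul_const c).const_mul (p α))
        (p α * ((Fintype.card I : ℝ) * c)) fun ω => ?_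
      rw [abs_mul, abs_of_nonneg (hpnn α), abs_mul, abs_of_nonneg (Nat.cast_nonneg _),
        abs_of_nonneg hcnon]
      exact mul_le_mul_of_nonneg_left
        (mul_le_mul_of_nonneg_right (hcard (N α) ω) hcnon) (hpnn α)
    have hEZ : ∫ ω, (Z ω : ℝ) ∂μ = ∑ β ∈ N α, p β := by
      have hptZ : (fun ω => (Z ω : ℝ)) = fun ω => ∑ β ∈ N α, (Y β ω : ℝ) := by
        funext ω; rw [hZdef]; push_cast; rfl
      rw [hptZ, integral_finset_sum _ (fun β _ => iY β)]
      exact Finset.sum_congr rfl fun β _ => hEY β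
    have hIA : |∫ ω, p α * (F lam (S ω + 1) - F lam (W ω + 1)) ∂μ|
        ≤ c * ∑ β ∈ N α, p α * p β := by
      calc |∫ ω, p α * (F lam (S ω + 1) - F lam (W ω + 1)) ∂μ|
          ≤ ∫ ω, |p α * (F lam (S ω + 1) - F lam (W ω + 1))| ∂μ := by
            simpa only [Real.norm_eq_abs] using
              norm_integral_le_integral_norm
                (fun ω => p α * (F lam (S ω + 1) - F lam (W ω + 1))) (μ := μ)
        _ ≤ ∫ ω, p α * ((Z ω : ℝ) * c) ∂μ := integral_mono iterm1.abs iA hptA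
        _ = p α * ((∑ β ∈ N α, p β) * c) := by
            rw [integral_const_mul, integral_mul_const, hEZ]
        _ = c * ∑ β ∈ N α, p α * p β := by
            rw [← Finset.mul_sum]
            ring
    -- bound for the second term
    have hptB : ∀ ω, |(Y α ω : ℝ) * (F lam (W ω + 1) - F lam (S ω))|
        ≤ c * ((Y α ω : ℝ) * (Z' ω : ℝ)) := by
      intro ω
      rcases hY01 α ω with h | h
      · simp [h]
      · have harg : S ω = W ω + 1 + Z' ω := by
          have h1 := hsplit α ω
          have h2 := hZsplit α ω
          simp only [hZ'def, hWdef]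
          omega
        rw [h, harg]
        simp only [Nat.cast_one, one_mul]
        rw [abs_sub_comm]
        calc |F lam (W ω + 1 + Z' ω) - F lam (W ω + 1)| ≤ (Z' ω : ℝ) * c :=
              hFchain (W ω) (Z' ω)
          _ = c * (Z' ω : ℝ) := mul_comm _ _
    have iprod : ∀ β, Integrable (fun ω => (Y α ω : ℝ) * (Y β ω : ℝ)) μ := by
      intro β
      refine intg_bd ((hmYR α).mul (hmYR β)) 1 fun ω => ?_
      rw [abs_mul]
      calc |(Y α ω : ℝ)| * |(Y β ω : ℝ)| ≤ 1 * 1 :=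
            mul_le_mul (by rw [abs_of_nonneg (hYnn α ω)]; exact hYle α ω)
              (by rw [abs_of_nonneg (hYnn β ω)]; exact hYle β ω) (abs_nonneg _) one_pos.le
        _ = 1 := one_mul 1
    have hmZ' : Measurable Z' := Finset.measurable_sum _ fun β _ => hmY β
    have hmZ'R : Measurable (fun ω => (Z' ω : ℝ)) :=
      (measurable_from_top (f := (Nat.cast : ℕ → ℝ))).comp hmZ'
    have iB : Integrable (fun ω => c * ((Y α ω : ℝ) * (Z' ω : ℝ))) μ := by
      refine intg_bd (((hmYR α).mul hmZ'R).const_mul c) (c * (1 * (Fintype.card I : ℝ)))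
        fun ω => ?_
      rw [abs_mul, abs_of_nonneg hcnon, abs_mul, abs_of_nonneg (hYnn α ω),
        abs_of_nonneg (Nat.cast_nonneg _)]
      refine mul_le_mul_of_nonneg_left ?_ hcnon
      exact mul_le_mul (hYle α ω) (hcard _ ω) (Nat.cast_nonneg _) one_pos.le
    have hEB : ∫ ω, c * ((Y α ω : ℝ) * (Z' ω : ℝ)) ∂μ
        = c * ∑ β ∈ (N α).erase α, ∫ ω, X α ω * X β ω ∂μ := by
      rw [integral_const_mul]
      congr 1
      have hptYZ : (fun ω => (Y α ω : ℝ) * (Z' ω : ℝ))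
          = fun ω => ∑ β ∈ (N α).erase α, (Y α ω : ℝ) * (Y β ω : ℝ) := by
        funext ω
        rw [hZ'def]
        push_cast
        rw [Finset.mul_sum]
      rw [hptYZ, integral_finset_sum _ (fun β _ => iprod β)]
      refine Finset.sum_congr rfl fun β _ => ?_
      refine integral_congr_ae (ae_of_all _ fun ω => ?_)
      show (Y α ω : ℝ) * (Y β ω : ℝ) = X α ω * X β ω
      rw [hXY α ω, hXY β ω]
    have hIB : |∫ ω, (Y α ω : ℝ) * (F lam (W ω + 1) - F lam (S ω)) ∂μ|
        ≤ c * ∑ β ∈ (N α).erase α, ∫ ω, X α ω * X β ω ∂μ := by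
      calc |∫ ω, (Y α ω : ℝ) * (F lam (W ω + 1) - F lam (S ω)) ∂μ|
          ≤ ∫ ω, |(Y α ω : ℝ) * (F lam (W ω + 1) - F lam (S ω))| ∂μ := by
            simpa only [Real.norm_eq_abs] using
              norm_integral_le_integral_norm
                (fun ω => (Y α ω : ℝ) * (F lam (W ω + 1) - F lam (S ω))) (μ := μ)
        _ ≤ ∫ ω, c * ((Y α ω : ℝ) * (Z' ω : ℝ)) ∂μ := integral_mono iterm3.abs iB hptB
        _ = c * ∑ β ∈ (N α).erase α, ∫ ω, X α ω * X β ω ∂μ := hEB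
    rw [hdec, mul_add]
    exact (abs_add_le _ _).trans (add_le_add hIA hIB)
  -- assembling everything
  have hG : ∀ α, Integrable (fun ω => p α * F lam (S ω + 1) - (Y α ω : ℝ) * F lam (S ω)) μ := by
    intro α
    refine (iFS1.const_mul (p α)).sub (intg_bd ((hmYR α).mul hmFS) c fun ω => ?_)
    rw [abs_mul]
    calc |(Y α ω : ℝ)| * |F lam (S ω)| ≤ 1 * c :=
          mul_le_mul (by rw [abs_of_nonneg (hYnn α ω)]; exact hYle α ω) (hFb _)
            (abs_nonneg _) one_pos.le
      _ = c := one_mul c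
  have hmain : (μ {ω | S ω = 0}).toReal - Real.exp (-lam)
      = ∑ α, ∫ ω, (p α * F lam (S ω + 1) - (Y α ω : ℝ) * F lam (S ω)) ∂μ := by
    rw [← integral_finset_sum _ (fun α _ => hG α)]
    have hpt : (fun ω => ∑ α, (p α * F lam (S ω + 1) - (Y α ω : ℝ) * F lam (S ω)))
        = fun ω => Set.indicator {ω | S ω = 0} (1 : Ω → ℝ) ω - Real.exp (-lam) := by
      funext ω
      have h1 := stein_eq hlne (S ω)
      have h2 : ∑ α, (p α * F lam (S ω + 1) - (Y α ω : ℝ) * F lam (S ω))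
          = lam * F lam (S ω + 1) - (S ω : ℝ) * F lam (S ω) := by
        rw [Finset.sum_sub_distrib, ← Finset.sum_mul, ← hlam, ← Finset.sum_mul]
        congr 2
        rw [hSdef]
        push_cast
        rfl
      rw [h2, h1]
      congr 1
      by_cases h : S ω = 0 <;> simp [Set.indicator_apply, h]
    have hind : Integrable (fun a => Set.indicator {ω | S ω = 0} (1 : Ω → ℝ) a) μ := by
      exact (integrable_const (1:ℝ)).indicator hevm
    rw [hpt, integral_sub hind (integrable_const _),
      integral_indicator_one hevm, integral_const]
    simp [measureReal_def]
  have hBnn : 0 ≤ (∑ α, ∑ β ∈ N α, p α * p β)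
      + ∑ α, ∑ β ∈ (N α).erase α, ∫ ω, X α ω * X β ω ∂μ := by
    have h1 : 0 ≤ ∑ α, ∑ β ∈ N α, p α * p β :=
      Finset.sum_nonneg fun α _ => Finset.sum_nonneg fun β _ => mul_nonneg (hpnn α) (hpnn β)
    have h2 : 0 ≤ ∑ α, ∑ β ∈ (N α).erase α, ∫ ω, X α ω * X β ω ∂μ := by
      refine Finset.sum_nonneg fun α _ => Finset.sum_nonneg fun β _ => ?_
      refine integral_nonneg fun ω => ?_
      rw [hXY α ω, hXY β ω]
      positivity
    linarith
  rw [hev, hmain]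
  calc |∑ α, ∫ ω, (p α * F lam (S ω + 1) - (Y α ω : ℝ) * F lam (S ω)) ∂μ|
      ≤ ∑ α, |∫ ω, (p α * F lam (S ω + 1) - (Y α ω : ℝ) * F lam (S ω)) ∂μ| :=
        Finset.abs_sum_le_sum_abs _ _
    _ ≤ ∑ α, c * ((∑ β ∈ N α, p α * p β) + ∑ β ∈ (N α).erase α, ∫ ω, X α ω * X β ω ∂μ) :=
        Finset.sum_le_sum fun α _ => hkey α
    _ = c * ((∑ α, ∑ β ∈ N α, p α * p β)
          + ∑ α, ∑ β ∈ (N α).erase α, ∫ ω, X α ω * X β ω ∂μ) := by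
        rw [← Finset.mul_sum, Finset.sum_add_distrib]
    _ ≤ min 1 lam⁻¹ * ((∑ α, ∑ β ∈ N α, p α * p β)
          + ∑ α, ∑ β ∈ (N α).erase α, ∫ ω, X α ω * X β ω ∂μ) :=
        mul_le_mul_of_nonneg_right (c_le_min hlampos) hBnn
end
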